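/- Let F, G, H be finite groups, let A ≤ F and B ≤ G be subgroups, let φ : B → A be a group isomorphism, let I = {(φ(b), b) : b ∈ B} ≤ F × G be the graph of φ, and let J ≤ G × H be any subgroup with p₁(J) = B. Then I * J = {(φ(b), h) : (b, h) ∈ J}, and for every subgroup L ≤ F × H one has τ_L^{I,J} = 1 if L = I * J and τ_L^{I,J} = 0 otherwise. -/

import Mathlib

open scoped Classical

namespace SubgroupCat

variable {R S T : Type*}

/-- The star product of subgroups `U ≤ R × S` and `V ≤ S × T`:
`U * V = {(r, t) | ∃ s, (r, s) ∈ U ∧ (s, t) ∈ V}`. -/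
def starProd [Group R] [Group S] [Group T] (U : Subgroup (R × S)) (V : Subgroup (S × T)) :
    Subgroup (R × T) where
  carrier := {rt | ∃ s : S, (rt.1, s) ∈ U ∧ (s, rt.2) ∈ V}
  one_mem' := ⟨1, one_mem U, one_mem V⟩
  mul_mem' := by
    rintro a b ⟨s, hU, hV⟩ ⟨s', hU', hV'⟩
    exact ⟨s * s', mul_mem hU hU', mul_mem hV hV'⟩
  inv_mem' := by
    rintro a ⟨s, hU, hV⟩
    exact ⟨s⁻¹, inv_mem hU, inv_mem hV⟩

@[simp] lemma mem_starProd [Group R] [Group S] [Group T] {U : Subgroup (R × S)}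
    {V : Subgroup (S × T)} {p : R × T} :
    p ∈ starProd U V ↔ ∃ s : S, (p.1, s) ∈ U ∧ (s, p.2) ∈ V := Iff.rfl

/-- First projection `p₁(U) = {r | ∃ s, (r, s) ∈ U}`. -/
def p1 [Group R] [Group S] (U : Subgroup (R × S)) : Subgroup R :=
  U.map (MonoidHom.fst R S)

/-- Second projection `p₂(U) = {s | ∃ r, (r, s) ∈ U}`. -/
def p2 [Group R] [Group S] (U : Subgroup (R × S)) : Subgroup S :=
  U.map (MonoidHom.snd R S)

/-- First kernel `k₁(U) = {r | (r, 1) ∈ U}`. -/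
def k1 [Group R] [Group S] (U : Subgroup (R × S)) : Subgroup R :=
  U.comap (MonoidHom.inl R S)

/-- Second kernel `k₂(U) = {s | (1, s) ∈ U}`. -/
def k2 [Group R] [Group S] (U : Subgroup (R × S)) : Subgroup S :=
  U.comap (MonoidHom.inr R S)

/-- The Möbius function of a finite poset: `pmoeb u i` is `möb(u, i)`. -/
noncomputable def pmoeb {P : Type*} [PartialOrder P] [Finite P] (u i : P) : ℤ :=
  if u = i then 1
  else if u < i then
    - ∑ v ∈ ({v : P | u < v ∧ v ≤ i}.toFinite.toFinset).attach, pmoeb v.1 i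
  else 0
termination_by Nat.card {w : P // u ≤ w}
decreasing_by
  · have hv := v.2
    rw [Set.Finite.mem_toFinset] at hv
    have hlt : u < (v : P) := hv.1
    have hsub : {w : P | (v : P) ≤ w} ⊂ {w : P | u ≤ w} :=
      ⟨fun w hw => le_trans hlt.le hw,
       fun hcon => absurd (hcon (le_refl u)) (by simpa using not_le_of_gt hlt)⟩
    rw [show {w : P // (v : P) ≤ w} = ↑{w : P | (v : P) ≤ w} from rfl,
      show {w : P // u ≤ w} = ↑{w : P | u ≤ w} from rfl,
      Nat.card_coe_set_eq, Nat.card_coe_set_eq]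
    exact Set.ncard_lt_ncard hsub (Set.toFinite _)

/-- `möb(U, I)` for subgroups of a finite group: the Möbius function of the
subgroup lattice. -/
noncomputable def moeb {G : Type*} [Group G] [Finite G] (U I : Subgroup G) : ℤ :=
  pmoeb U I

/-- `ℓ(A) = ℓ(|A|)` for a finite group `A`, where `ℓ : ℕ⁺ →* 𝕂ˣ`. -/
noncomputable def ellG {𝕂 : Type*} [Field 𝕂] (ℓ : ℕ+ →* 𝕂ˣ) (A : Type*) [Group A] [Finite A] :
    𝕂 :=
  (ℓ ⟨Nat.card A, Nat.card_pos⟩ : 𝕂ˣ)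

/-- The cocycle `σ(U, V) = ℓ(k₂(U) ∩ k₁(V))`. -/
noncomputable def sigmaC {𝕂 : Type*} [Field 𝕂] (ℓ : ℕ+ →* 𝕂ˣ)
    {F G H : Type*} [Group F] [Group G] [Group H] [Finite G]
    (U : Subgroup (F × G)) (V : Subgroup (G × H)) : 𝕂 :=
  ellG ℓ ↑(k2 U ⊓ k1 V)

/-- `τ_K^{I,J} = ∑ möb(U,I) · möb(V,J) · σ(U,V)`, the sum being over all pairs
of subgroups `(U, V)` with `U ≤ I`, `V ≤ J` and `K ≤ U * V`. -/
noncomputable def tau {𝕂 : Type*} [Field 𝕂] (ℓ : ℕ+ →* 𝕂ˣ)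
    {F G H : Type*} [Group F] [Group G] [Group H] [Finite F] [Finite G] [Finite H]
    (I : Subgroup (F × G)) (J : Subgroup (G × H)) (K : Subgroup (F × H)) : 𝕂 :=
  ∑ᶠ q ∈ {q : Subgroup (F × G) × Subgroup (G × H) |
      q.1 ≤ I ∧ q.2 ≤ J ∧ K ≤ starProd q.1 q.2},
    (moeb q.1 I : 𝕂) * (moeb q.2 J : 𝕂) * sigmaC ℓ q.1 q.2

/-! ### Auxiliary lemmas -/

lemma mem_p1 [Group R] [Group S] {U : Subgroup (R × S)} {r : R} :
    r ∈ p1 U ↔ ∃ s : S, (r, s) ∈ U := by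
  simp only [p1, Subgroup.mem_map]
  constructor
  · rintro ⟨⟨a, b⟩, hab, rfl⟩
    exact ⟨b, hab⟩
  · rintro ⟨s, hs⟩
    exact ⟨(r, s), hs, rfl⟩

lemma pmoeb_self {P : Type*} [PartialOrder P] [Finite P] (i : P) : pmoeb i i = 1 := by
  rw [pmoeb]; simp

lemma pmoeb_sum {P : Type*} [PartialOrder P] [Finite P] (u i : P) :
    ∑ v ∈ ({v : P | u ≤ v ∧ v ≤ i}.toFinite.toFinset), pmoeb v i
      = if u = i then 1 else 0 := by
  by_cases h : u = i
  · subst h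
    have hs : ({v : P | u ≤ v ∧ v ≤ u}.toFinite.toFinset) = {u} := by
      ext v
      simp only [Set.Finite.mem_toFinset, Set.mem_setOf_eq, Finset.mem_singleton]
      constructor
      · rintro ⟨h1, h2⟩; exact le_antisymm h2 h1
      · rintro rfl; exact ⟨le_rfl, le_rfl⟩
    rw [hs]
    simp [pmoeb_self]
  · rw [if_neg h]
    by_cases hle : u ≤ i
    · have hlt : u < i := lt_of_le_of_ne hle h
      have hs : ({v : P | u ≤ v ∧ v ≤ i}.toFinite.toFinset)
          = insert u (({v : P | u < v ∧ v ≤ i}.toFinite.toFinset)) := by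
        ext v
        simp only [Set.Finite.mem_toFinset, Set.mem_setOf_eq, Finset.mem_insert]
        constructor
        · rintro ⟨h1, h2⟩
          rcases eq_or_lt_of_le h1 with h3 | h3
          · exact Or.inl h3.symm
          · exact Or.inr ⟨h3, h2⟩
        · rintro (rfl | ⟨h1, h2⟩)
          · exact ⟨le_rfl, hle⟩
          · exact ⟨h1.le, h2⟩
      rw [hs, Finset.sum_insert (by simp [Set.Finite.mem_toFinset])]
      rw [pmoeb, if_neg h, if_pos hlt,
        Finset.sum_attach (({v : P | u < v ∧ v ≤ i}.toFinite.toFinset)) (fun v => pmoeb v i)]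
      ring
    · have hs : ({v : P | u ≤ v ∧ v ≤ i}.toFinite.toFinset) = ∅ := by
        ext v
        simp only [Set.Finite.mem_toFinset, Set.mem_setOf_eq, Finset.notMem_empty, iff_false,
          not_and]
        intro h1 h2
        exact hle (h1.trans h2)
      rw [hs]
      simp

lemma pmoeb_sum_field {𝕂 : Type*} [Field 𝕂] {P : Type*} [PartialOrder P] [Finite P] [Fintype P]
    (u i : P) :
    ∑ v : P, (if u ≤ v ∧ v ≤ i then ((pmoeb v i : ℤ) : 𝕂) else 0) = if u = i then 1 else 0 := by
  have hset : Finset.univ.filter (fun v : P => u ≤ v ∧ v ≤ i)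
      = {v : P | u ≤ v ∧ v ≤ i}.toFinite.toFinset := by
    ext v; simp [Set.Finite.mem_toFinset]
  rw [← Finset.sum_filter, hset]
  rw [show ∑ v ∈ ({v : P | u ≤ v ∧ v ≤ i}.toFinite.toFinset), ((pmoeb v i : ℤ) : 𝕂)
      = ((∑ v ∈ ({v : P | u ≤ v ∧ v ≤ i}.toFinite.toFinset), pmoeb v i : ℤ) : 𝕂) by
    push_cast; rfl]
  rw [pmoeb_sum u i]
  split_ifs <;> simp

lemma moeb_sum_field {𝕂 : Type*} [Field 𝕂] {G' : Type*} [Group G'] [Finite G']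
    [Fintype (Subgroup G')] (u i : Subgroup G') :
    ∑ v : Subgroup G', (if u ≤ v ∧ v ≤ i then ((moeb v i : ℤ) : 𝕂) else 0)
      = if u = i then 1 else 0 :=
  pmoeb_sum_field u i

/-- If `I` is the graph `{(φ(b), b) : b ∈ B}` of an isomorphism `φ : B → A` and
`J ≤ G × H` has `p₁(J) = B`, then `I * J = {(φ(b), h) : (b, h) ∈ J}` and
`τ_L^{I,J} = 1` if `L = I * J`, and `τ_L^{I,J} = 0` otherwise. -/
theorem tau_graph_left {𝕂 : Type*} [Field 𝕂] [CharZero 𝕂] (ℓ : ℕ+ →* 𝕂ˣ)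
    (F G H : Type*) [Group F] [Group G] [Group H] [Finite F] [Finite G] [Finite H]
    (A : Subgroup F) (B : Subgroup G) (φ : B ≃* A)
    (I : Subgroup (F × G)) (hI : I = ((A.subtype.comp φ.toMonoidHom).prod B.subtype).range)
    (J : Subgroup (G × H)) (hJ : p1 J = B) :
    (∀ p : F × H, p ∈ starProd I J ↔
      ∃ b : B, p.1 = ((φ b : A) : F) ∧ (((b : G)), p.2) ∈ J) ∧
    ∀ L : Subgroup (F × H), tau ℓ I J L = if L = starProd I J then 1 else 0 := by
  have hImem : ∀ p : F × G, p ∈ I ↔ ∃ b : B, ((φ b : A) : F) = p.1 ∧ (b : G) = p.2 := by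
    intro p
    rw [hI, MonoidHom.mem_range]
    constructor
    · rintro ⟨b, rfl⟩
      exact ⟨b, rfl, rfl⟩
    · rintro ⟨b, h1, h2⟩
      exact ⟨b, Prod.ext h1 h2⟩
  have hIb : ∀ b : B, (((φ b : A) : F), (b : G)) ∈ I := fun b => (hImem _).2 ⟨b, rfl, rfl⟩
  have hgraph : ∀ {f : F} {s s' : G}, (f, s) ∈ I → (f, s') ∈ I → s = s' := by
    intro f s s' h1 h2
    obtain ⟨b, hb1, hb2⟩ := (hImem _).1 h1
    obtain ⟨b', hb1', hb2'⟩ := (hImem _).1 h2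
    have hφ : (φ b : A) = φ b' := Subtype.ext (hb1.trans hb1'.symm)
    have hbb : b = b' := φ.injective hφ
    have hb2a : (b : G) = s := hb2
    have hb2b : (b' : G) = s' := hb2'
    rw [← hb2a, ← hb2b, hbb]
  have hgraph2 : ∀ (b : B) {s : G}, (((φ b : A) : F), s) ∈ I → s = (b : G) :=
    fun b s h => hgraph h (hIb b)
  have hmemA : ∀ {f : F} {g : G}, (f, g) ∈ I → f ∈ A := by
    intro f g h
    obtain ⟨b, hb1, -⟩ := (hImem _).1 h
    have hb1' : ((φ b : A) : F) = f := hb1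
    rw [← hb1']
    exact (φ b).2
  have hJB : ∀ {g : G} {h : H}, (g, h) ∈ J → g ∈ B := by
    intro g h hgh
    rw [← hJ]
    exact mem_p1.2 ⟨h, hgh⟩
  have hBJ : ∀ b : B, ∃ h : H, ((b : G), h) ∈ J := by
    intro b
    have hb : (b : G) ∈ p1 J := by rw [hJ]; exact b.2
    exact mem_p1.1 hb
  have hsymm : ∀ (f : F) (hf : f ∈ A), ((φ (φ.symm ⟨f, hf⟩) : A) : F) = f := by
    intro f hf
    rw [φ.apply_symm_apply]
  have part1 : ∀ p : F × H, p ∈ starProd I J ↔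
      ∃ b : B, p.1 = ((φ b : A) : F) ∧ (((b : G)), p.2) ∈ J := by
    intro p
    constructor
    · rintro ⟨s, hU, hV⟩
      obtain ⟨b, hb1, hb2⟩ := (hImem _).1 hU
      have hb1' : ((φ b : A) : F) = p.1 := hb1
      have hb2' : (b : G) = s := hb2
      exact ⟨b, hb1'.symm, by rw [hb2']; exact hV⟩
    · rintro ⟨b, h1, h2⟩
      exact ⟨(b : G), by rw [show p.1 = ((φ b : A) : F) from h1]; exact hIb b, h2⟩
  refine ⟨part1, fun L => ?_⟩
  haveI : Fintype (Subgroup (F × G)) := Fintype.ofFinite _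
  haveI : Fintype (Subgroup (G × H)) := Fintype.ofFinite _
  set Umin : Subgroup (F × G) := I ⊓ (p1 L).comap (MonoidHom.fst F G) with hUminDef
  set Iflip : Subgroup (G × F) := (B.subtype.prod (A.subtype.comp φ.toMonoidHom)).range
    with hIflipDef
  set Vmin : Subgroup (G × H) := starProd Iflip L with hVminDef
  have hUminMem : ∀ p : F × G, p ∈ Umin ↔ p ∈ I ∧ p.1 ∈ p1 L := by
    intro p
    rw [hUminDef]
    simp [Subgroup.mem_inf, Subgroup.mem_comap]
  have hIflipMem : ∀ q : G × F, q ∈ Iflip ↔ ∃ b : B, (b : G) = q.1 ∧ ((φ b : A) : F) = q.2 := by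
    intro q
    rw [hIflipDef, MonoidHom.mem_range]
    constructor
    · rintro ⟨b, rfl⟩
      exact ⟨b, rfl, rfl⟩
    · rintro ⟨b, h1, h2⟩
      exact ⟨b, Prod.ext h1 h2⟩
  have hVminMem : ∀ q : G × H, q ∈ Vmin ↔
      ∃ b : B, (b : G) = q.1 ∧ (((φ b : A) : F), q.2) ∈ L := by
    intro q
    rw [hVminDef]
    constructor
    · rintro ⟨f, hf1, hf2⟩
      obtain ⟨b, hb1, hb2⟩ := (hIflipMem _).1 hf1
      have hb1' : (b : G) = q.1 := hb1
      have hb2' : ((φ b : A) : F) = f := hb2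
      exact ⟨b, hb1', by rw [hb2']; exact hf2⟩
    · rintro ⟨b, hb1, hb2⟩
      exact ⟨((φ b : A) : F), (hIflipMem _).2 ⟨b, hb1, rfl⟩, hb2⟩
  have hkey1 : ∀ U : Subgroup (F × G), U ≤ I → ∀ V : Subgroup (G × H),
      (L ≤ starProd U V ↔ L ≤ starProd I V ∧ Umin ≤ U) := by
    intro U hU V
    constructor
    · intro hL
      refine ⟨fun p hp => ?_, fun p hp => ?_⟩
      · obtain ⟨s, h1, h2⟩ := hL hp
        exact ⟨s, hU h1, h2⟩
      · obtain ⟨hpI, hp1⟩ := (hUminMem p).1 hp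
        obtain ⟨h, hh⟩ := mem_p1.1 hp1
        obtain ⟨s, h1, h2⟩ := hL hh
        have hs : s = p.2 := hgraph (hU h1) (show (p.1, p.2) ∈ I from hpI)
        rw [hs] at h1
        exact h1
    · rintro ⟨hLIV, hUmU⟩ p hp
      obtain ⟨s, h1, h2⟩ := hLIV hp
      have hp1 : p.1 ∈ p1 L := mem_p1.2 ⟨p.2, show (p.1, p.2) ∈ L from hp⟩
      exact ⟨s, hUmU ((hUminMem (p.1, s)).2 ⟨h1, hp1⟩), h2⟩
  have hkey2 : ∀ V : Subgroup (G × H), (L ≤ starProd I V ↔ p1 L ≤ A ∧ Vmin ≤ V) := by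
    intro V
    constructor
    · intro hL
      constructor
      · intro f hf
        obtain ⟨h, hh⟩ := mem_p1.1 hf
        obtain ⟨s, h1, h2⟩ := hL hh
        exact hmemA h1
      · intro q hq
        obtain ⟨b, hb1, hb2⟩ := (hVminMem q).1 hq
        obtain ⟨s, h1, h2⟩ := hL hb2
        have hs : s = (b : G) := hgraph2 b h1
        rw [hs] at h2
        have : (q.1, q.2) ∈ V := by rw [← hb1]; exact h2
        exact this
    · rintro ⟨hA, hV⟩ p hp
      have hf : p.1 ∈ A := hA (mem_p1.2 ⟨p.2, show (p.1, p.2) ∈ L from hp⟩)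
      refine ⟨((φ.symm ⟨p.1, hf⟩ : B) : G), ?_, hV ((hVminMem _).2 ⟨φ.symm ⟨p.1, hf⟩, rfl, ?_⟩)⟩
      · exact (hImem _).2 ⟨φ.symm ⟨p.1, hf⟩, hsymm p.1 hf, rfl⟩
      · rw [hsymm p.1 hf]
        exact hp
  have hL_Umin : L = starProd I J → Umin = I := by
    intro h
    refine le_antisymm inf_le_left fun p hp => ?_
    refine (hUminMem p).2 ⟨hp, ?_⟩
    obtain ⟨b, hb1, hb2⟩ := (hImem p).1 hp
    obtain ⟨hh, hhJ⟩ := hBJ b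
    refine mem_p1.2 ⟨hh, ?_⟩
    rw [h]
    exact ⟨(b : G), by rw [← hb1]; exact hIb b, hhJ⟩
  have hL_A : L = starProd I J → p1 L ≤ A := by
    intro h f hf
    obtain ⟨hh, hhL⟩ := mem_p1.1 hf
    rw [h] at hhL
    obtain ⟨s, h1, h2⟩ := hhL
    exact hmemA h1
  have hVminJ : p1 L ≤ A → (L = starProd I J ↔ Vmin = J) := by
    intro hA
    constructor
    · intro h
      apply le_antisymm
      · intro q hq
        obtain ⟨b, hb1, hb2⟩ := (hVminMem q).1 hq
        rw [h] at hb2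
        obtain ⟨s, h1, h2⟩ := hb2
        have hs : s = (b : G) := hgraph2 b h1
        rw [hs] at h2
        have : (q.1, q.2) ∈ J := by rw [← hb1]; exact h2
        exact this
      · intro q hq
        have hB : q.1 ∈ B := hJB (show (q.1, q.2) ∈ J from hq)
        refine (hVminMem q).2 ⟨⟨q.1, hB⟩, rfl, ?_⟩
        rw [h]
        exact ⟨q.1, hIb ⟨q.1, hB⟩, show (q.1, q.2) ∈ J from hq⟩
    · intro h
      apply le_antisymm
      · intro p hp
        have hf : p.1 ∈ A := hA (mem_p1.2 ⟨p.2, show (p.1, p.2) ∈ L from hp⟩)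
        have hmem : (((φ.symm ⟨p.1, hf⟩ : B) : G), p.2) ∈ Vmin :=
          (hVminMem _).2 ⟨φ.symm ⟨p.1, hf⟩, rfl, by rw [hsymm p.1 hf]; exact hp⟩
        rw [h] at hmem
        exact ⟨((φ.symm ⟨p.1, hf⟩ : B) : G),
          (hImem _).2 ⟨φ.symm ⟨p.1, hf⟩, hsymm p.1 hf, rfl⟩, hmem⟩
      · intro p hp
        obtain ⟨s, h1, h2⟩ := hp
        obtain ⟨b, hb1, hb2⟩ := (hImem _).1 h1
        have hb1' : ((φ b : A) : F) = p.1 := hb1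
        have hb2' : (b : G) = s := hb2
        rw [← h] at h2
        obtain ⟨b', hb1'', hb2''⟩ := (hVminMem _).1 h2
        have hb1''' : (b' : G) = s := hb1''
        have hbb : b' = b := Subtype.ext (hb1'''.trans hb2'.symm)
        rw [hbb] at hb2''
        have : (p.1, p.2) ∈ L := by rw [← hb1']; exact hb2''
        exact this
  have hsigma : ∀ U : Subgroup (F × G), U ≤ I → ∀ V : Subgroup (G × H), sigmaC ℓ U V = 1 := by
    intro U hU V
    have hk : k2 U ⊓ k1 V = ⊥ := by
      rw [eq_bot_iff]
      intro s hs
      have hs1 : (1, s) ∈ U := hs.1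
      obtain ⟨b, hb1, hb2⟩ := (hImem _).1 (hU hs1)
      have hb1' : ((φ b : A) : F) = 1 := hb1
      have hb2' : (b : G) = s := hb2
      have hφb : (φ b : A) = 1 := Subtype.ext hb1'
      have hb : b = 1 := φ.injective (by rw [hφb, map_one])
      rw [Subgroup.mem_bot, ← hb2', hb]
      rfl
    have hcard : Nat.card ↥(k2 U ⊓ k1 V) = 1 := by
      rw [hk]
      exact Subgroup.card_bot
    rw [sigmaC, ellG]
    have h1 : (⟨Nat.card ↥(k2 U ⊓ k1 V), Nat.card_pos⟩ : ℕ+) = 1 := Subtype.ext hcard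
    rw [show ℓ ⟨Nat.card ↥(k2 U ⊓ k1 V), Nat.card_pos⟩ = 1 from (congrArg ℓ h1).trans (map_one ℓ), Units.val_one]
  have hsum : tau ℓ I J L
      = (∑ U : Subgroup (F × G), if Umin ≤ U ∧ U ≤ I then ((moeb U I : ℤ) : 𝕂) else 0)
        * ∑ V : Subgroup (G × H),
            if V ≤ J ∧ L ≤ starProd I V then ((moeb V J : ℤ) : 𝕂) else 0 := by
    rw [tau]
    rw [show {q : Subgroup (F × G) × Subgroup (G × H) |
        q.1 ≤ I ∧ q.2 ≤ J ∧ L ≤ starProd q.1 q.2}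
        = ↑(Finset.univ.filter (fun q : Subgroup (F × G) × Subgroup (G × H) =>
            q.1 ≤ I ∧ q.2 ≤ J ∧ L ≤ starProd q.1 q.2)) by ext q; simp]
    rw [finsum_mem_coe_finset, Finset.sum_filter, Fintype.sum_prod_type, Finset.sum_mul_sum]
    refine Finset.sum_congr rfl fun U _ => Finset.sum_congr rfl fun V _ => ?_
    by_cases hU : U ≤ I
    · by_cases hL2 : L ≤ starProd U V
      · obtain ⟨hLIV, hUmU⟩ := (hkey1 U hU V).1 hL2
        by_cases hV : V ≤ J
        · rw [if_pos ⟨hU, hV, hL2⟩, if_pos ⟨hUmU, hU⟩, if_pos ⟨hV, hLIV⟩,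
            hsigma U hU V, mul_one]
        · rw [if_neg (show ¬(U ≤ I ∧ V ≤ J ∧ L ≤ starProd U V) from fun hc => hV hc.2.1),
            if_neg (show ¬(V ≤ J ∧ L ≤ starProd I V) from fun hc => hV hc.1), mul_zero]
      · rw [if_neg (show ¬(U ≤ I ∧ V ≤ J ∧ L ≤ starProd U V) from fun hc => hL2 hc.2.2)]
        by_cases hQ1 : Umin ≤ U ∧ U ≤ I
        · by_cases hQ2 : V ≤ J ∧ L ≤ starProd I V
          · exact absurd ((hkey1 U hU V).2 ⟨hQ2.2, hQ1.1⟩) hL2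
          · rw [if_neg hQ2, mul_zero]
        · rw [if_neg hQ1, zero_mul]
    · rw [if_neg (show ¬(U ≤ I ∧ V ≤ J ∧ L ≤ starProd U V) from fun hc => hU hc.1),
        if_neg (show ¬(Umin ≤ U ∧ U ≤ I) from fun hc => hU hc.2), zero_mul]
  rw [hsum, moeb_sum_field Umin I]
  by_cases hUm : Umin = I
  · rw [if_pos hUm, one_mul]
    by_cases hA : p1 L ≤ A
    · have hcongr : ∀ V : Subgroup (G × H),
          (if V ≤ J ∧ L ≤ starProd I V then ((moeb V J : ℤ) : 𝕂) else 0)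
          = (if Vmin ≤ V ∧ V ≤ J then ((moeb V J : ℤ) : 𝕂) else 0) := by
        intro V
        refine if_congr ?_ rfl rfl
        rw [hkey2 V]
        tauto
      rw [Finset.sum_congr rfl fun V _ => hcongr V, moeb_sum_field Vmin J]
      have hiff : (L = starProd I J) ↔ (Vmin = J) := hVminJ hA
      by_cases hV : Vmin = J
      · rw [if_pos hV, if_pos (hiff.2 hV)]
      · rw [if_neg hV, if_neg (fun hc => hV (hiff.1 hc))]
    · have hz : ∀ V : Subgroup (G × H),
          (if V ≤ J ∧ L ≤ starProd I V then ((moeb V J : ℤ) : 𝕂) else 0) = 0 := by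
        intro V
        rw [if_neg]
        rintro ⟨-, hLV⟩
        exact hA ((hkey2 V).1 hLV).1
      rw [Finset.sum_congr rfl fun V _ => hz V, Finset.sum_const_zero,
        if_neg (fun hc => hA (hL_A hc))]
  · rw [if_neg hUm, zero_mul, if_neg (fun hc => hUm (hL_Umin hc))]

end SubgroupCat
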